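/- Let a, b ∈ ℝ with -1 < a < 0 and b < 0, and set M := (1 + a·exp(W₀(-e/a) - 1))·b·(1 - W₀(-e/a)). If 0 < y < M, then the equation |1 + a·exp(-x/b)|·x = y has exactly three solutions in [0,∞). -/

import Mathlib

open Real Set

set_option maxHeartbeats 2000000 in
theorem stmt_16 (a b : ℝ) (ha1 : -1 < a) (ha2 : a < 0) (hb : b < 0)
    (z0 : ℝ) (hz0 : -1 ≤ z0 ∧ z0 * Real.exp z0 = -(Real.exp 1) / a)
    (M : ℝ) (hM : M = (1 + a * Real.exp (z0 - 1)) * (b * (1 - z0)))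
    (y : ℝ) (hy1 : 0 < y) (hy2 : y < M) :
    {x : ℝ | 0 ≤ x ∧ |1 + a * Real.exp (-x / b)| * x = y}.ncard = 3 := by
  obtain ⟨hz0a, hz0b⟩ := hz0
  have hb0 : b ≠ 0 := ne_of_lt hb
  have ha0 : a ≠ 0 := ne_of_lt ha2
  have hmb : (0:ℝ) < -b := by linarith
  -- z0 > 1
  have hz1 : 1 < z0 := by
    by_contra h
    push_neg at h
    have h1 : z0 * Real.exp z0 ≤ Real.exp 1 := by
      have := Real.exp_le_exp.mpr h
      nlinarith [Real.exp_pos z0]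
    have h2 : Real.exp 1 < -(Real.exp 1)/a := by
      rw [lt_div_iff_of_neg ha2]
      nlinarith [Real.exp_pos 1]
    rw [hz0b] at h1; linarith
  have hz0pos : 0 < z0 := by linarith
  -- key algebraic fact: a * exp(z0-1) * z0 = -1
  have key : a * Real.exp (z0 - 1) * z0 = -1 := by
    rw [Real.exp_sub]
    have he1 : Real.exp 1 ≠ 0 := (Real.exp_pos 1).ne'
    field_simp
    field_simp at hz0b
    linarith [hz0b]
  -- critical point and zero point
  set x0 : ℝ := b * (1 - z0) with hx0def
  set xs : ℝ := b * Real.log (-a) with hxsdef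
  have hx0pos : 0 < x0 := mul_pos_of_neg_of_neg hb (by linarith)
  have hloga : Real.log (-a) < 0 := Real.log_neg (by linarith) (by linarith)
  have hxspos : 0 < xs := mul_pos_of_neg_of_neg hb hloga
  have hx0b : -x0 / b = z0 - 1 := by field_simp [hx0def]; ring
  have hxsb : -xs / b = -Real.log (-a) := by
    rw [hxsdef, neg_div, mul_div_cancel_left₀ _ hb0]
  -- x0 < xs
  have hlogz : Real.log (-a) < 1 - z0 := by
    have hinv : z0 * Real.exp (z0 - 1) = -1/a := by
      rw [Real.exp_sub]
      field_simp
      field_simp at hz0b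
      linarith [hz0b]
    have h1 : Real.log (-1/a) = Real.log z0 + (z0 - 1) := by
      rw [← hinv, Real.log_mul (by positivity) (Real.exp_ne_zero _), Real.log_exp]
    have h2 : Real.log (-1/a) = -Real.log (-a) := by
      rw [show -1/a = (-a)⁻¹ by field_simp, Real.log_inv]
    have h3 : 0 < Real.log z0 := Real.log_pos hz1
    linarith [h2 ▸ h1]
  have hx0xs : x0 < xs := by
    rw [hx0def, hxsdef]
    nlinarith
  -- division monotonicity
  have hdiv : ∀ {u v : ℝ}, u < v → -u/b < -v/b := by
    intro u v h
    have h1 : 0 < (v - u)/(-b) := div_pos (by linarith) hmb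
    have h2 : -v/b - -u/b = (v - u)/(-b) := by field_simp; ring
    linarith
  -- the function g
  set g : ℝ → ℝ := fun x => (1 + a * Real.exp (-x / b)) * x with hgdef
  have hgval : ∀ x : ℝ, g x = (1 + a * Real.exp (-x / b)) * x := fun x => rfl
  have hcont : Continuous g := by
    rw [hgdef]; fun_prop
  -- s strictly anti
  have hs_anti : ∀ {u v : ℝ}, u < v →
      1 + a * Real.exp (-v/b) < 1 + a * Real.exp (-u/b) := by
    intro u v h
    have := Real.exp_lt_exp.mpr (hdiv h)
    nlinarith
  have hsxs : 1 + a * Real.exp (-xs/b) = 0 := by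
    rw [hxsb, Real.exp_neg, Real.exp_log (by linarith : (0:ℝ) < -a)]
    field_simp
    ring
  -- derivative
  have hderiv : ∀ x : ℝ, HasDerivAt g (1 + a * Real.exp (-x/b) * (1 - x/b)) x := by
    intro x
    have h1 : HasDerivAt (fun x : ℝ => -x/b) (-1/b) x := by
      simpa using ((hasDerivAt_id x).neg.div_const b)
    have h2 := h1.exp
    have h3 := (h2.const_mul a).const_add 1
    have h4 : HasDerivAt (fun y => (1 + a * Real.exp (-y / b)) * y) _ x := h3.mul (hasDerivAt_id x)
    rw [hgdef]
    convert h4 using 1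
    ring
  -- h strictly anti on [0, ∞)
  have hh_anti : ∀ {u v : ℝ}, 0 ≤ u → u < v →
      a * Real.exp (-v/b) * (1 - v/b) < a * Real.exp (-u/b) * (1 - u/b) := by
    intro u v hu huv
    have h1 : -u/b < -v/b := hdiv huv
    have h2 : (0:ℝ) ≤ -u/b := by
      have := div_nonpos_of_nonneg_of_nonpos hu (le_of_lt hb)
      rw [neg_div]; linarith
    have h3 : Real.exp (-u/b) < Real.exp (-v/b) := Real.exp_lt_exp.mpr h1
    have h4 : Real.exp (-u/b) * (1 - u/b) < Real.exp (-v/b) * (1 - v/b) := by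
      have : (1:ℝ) - u/b = 1 + -u/b := by ring
      have : (1:ℝ) - v/b = 1 + -v/b := by ring
      nlinarith [Real.exp_pos (-u/b), Real.exp_pos (-v/b)]
    nlinarith
  have hhx0 : a * Real.exp (-x0/b) * (1 - x0/b) = -1 := by
    have : (1:ℝ) - x0/b = z0 := by
      have := hx0b; field_simp at this ⊢; linarith
    rw [hx0b, this]; exact key
  -- monotonicity
  have hmono : StrictMonoOn g (Icc 0 x0) := by
    apply strictMonoOn_of_deriv_pos (convex_Icc 0 x0) hcont.continuousOn
    intro x hx
    rw [interior_Icc] at hx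
    rw [(hderiv x).deriv]
    have := hh_anti (le_of_lt hx.1) hx.2
    rw [hhx0] at this
    linarith
  have hanti : StrictAntiOn g (Ici x0) := by
    apply strictAntiOn_of_deriv_neg (convex_Ici x0) hcont.continuousOn
    intro x hx
    rw [interior_Ici] at hx
    rw [(hderiv x).deriv]
    have := hh_anti (le_of_lt hx0pos) hx
    rw [hhx0] at this
    linarith
  -- values
  have hg0 : g 0 = 0 := by rw [hgval 0]; ring
  have hgx0 : g x0 = M := by
    rw [hgval x0, hM, hx0b]
  have hgxs : g xs = 0 := by
    rw [hgval xs, hsxs, zero_mul]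
  -- big X
  have ha2a : (0:ℝ) < -2/a := by
    have hma : (0:ℝ) < -a := by linarith
    rw [show (-2:ℝ)/a = 2/(-a) by ring]
    exact div_pos two_pos hma
  set X : ℝ := max xs (max (y + 1) (-b * Real.log (-2/a))) with hXdef
  have hXxs : xs ≤ X := le_max_left _ _
  have hXy : y + 1 ≤ X := le_trans (le_max_left _ _) (le_max_right _ _)
  have hXpos : 0 < X := by linarith
  have hXlog : Real.log (-2/a) ≤ -X/b := by
    have h1 : -b * Real.log (-2/a) ≤ X := le_trans (le_max_right _ _) (le_max_right _ _)
    have h2 : -X/b = X/(-b) := by field_simp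
    rw [h2, le_div_iff₀ hmb]
    linarith [h1]
  have hgX : g X < -y := by
    have h1 : Real.exp (Real.log (-2/a)) ≤ Real.exp (-X/b) := Real.exp_le_exp.mpr hXlog
    rw [Real.exp_log ha2a] at h1
    have h2 : a * Real.exp (-X/b) ≤ -2 := by
      have ht : a * (-2/a) = -2 := by field_simp
      have hprod : (0:ℝ) ≤ (Real.exp (-X/b) - (-2/a)) * (-a) :=
        mul_nonneg (by linarith) (by linarith)
      have hexp : (Real.exp (-X/b) - (-2/a)) * (-a)
          = -(a * Real.exp (-X/b)) + a * (-2/a) := by ring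
      rw [hexp] at hprod
      linarith
    have h3 : g X ≤ -X := by
      rw [hgval X]
      have h4 : (1 + a * Real.exp (-X/b)) ≤ -1 := by linarith
      have h5 : (0:ℝ) ≤ (-1 - (1 + a * Real.exp (-X/b))) * X :=
        mul_nonneg (by linarith) (le_of_lt hXpos)
      nlinarith [h5]
    linarith
  -- existence of the three solutions
  have hMpos : 0 < M := lt_trans hy1 hy2
  have hx1 : ∃ x1 ∈ Ioo 0 x0, g x1 = y := by
    have := intermediate_value_Ioo (le_of_lt hx0pos) hcont.continuousOn
    rw [hg0, hgx0] at this
    obtain ⟨x1, hm, he⟩ := this ⟨hy1, hy2⟩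
    exact ⟨x1, hm, he⟩
  have hx2 : ∃ x2 ∈ Ioo x0 xs, g x2 = y := by
    have := intermediate_value_Ioo' (le_of_lt hx0xs) hcont.continuousOn
    rw [hgxs, hgx0] at this
    obtain ⟨x2, hm, he⟩ := this ⟨hy1, hy2⟩
    exact ⟨x2, hm, he⟩
  have hx3 : ∃ x3 ∈ Ioo xs X, g x3 = -y := by
    have := intermediate_value_Ioo' hXxs hcont.continuousOn
    rw [hgxs] at this
    obtain ⟨x3, hm, he⟩ := this ⟨hgX, by linarith⟩
    exact ⟨x3, hm, he⟩
  obtain ⟨x1, hx1m, hx1e⟩ := hx1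
  obtain ⟨x2, hx2m, hx2e⟩ := hx2
  obtain ⟨x3, hx3m, hx3e⟩ := hx3
  -- set equality
  have hset : {x : ℝ | 0 ≤ x ∧ |1 + a * Real.exp (-x / b)| * x = y} = {x1, x2, x3} := by
    ext x
    simp only [mem_setOf_eq, mem_insert_iff, mem_singleton_iff]
    constructor
    · rintro ⟨hxnn, hxy⟩
      rcases le_total x xs with hle | hge
      · have hs : 0 ≤ 1 + a * Real.exp (-x/b) := by
          rcases eq_or_lt_of_le hle with h | h
          · rw [h, hsxs]
          · linarith [hs_anti h, hsxs]
        have hgx : g x = y := by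
          rw [hgval x]; rw [abs_of_nonneg hs] at hxy; exact hxy
        rcases le_total x x0 with h1 | h1
        · left
          exact hmono.injOn ⟨hxnn, h1⟩ ⟨le_of_lt hx1m.1, le_of_lt hx1m.2⟩
            (hgx.trans hx1e.symm)
        · right; left
          exact hanti.injOn h1 (le_of_lt hx2m.1) (hgx.trans hx2e.symm)
      · have hs : 1 + a * Real.exp (-x/b) ≤ 0 := by
          rcases eq_or_lt_of_le hge with h | h
          · rw [← h, hsxs]
          · linarith [hs_anti h, hsxs]
        have hgx : g x = -y := by
          rw [hgval x]; rw [abs_of_nonpos hs] at hxy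
          nlinarith [hxy]
        right; right
        exact hanti.injOn (le_trans (le_of_lt hx0xs) hge)
          (le_trans (le_of_lt hx0xs) (le_of_lt hx3m.1)) (hgx.trans hx3e.symm)
    · have hspos : ∀ {u : ℝ}, u < xs → 0 < 1 + a * Real.exp (-u/b) := by
        intro u h
        linarith [hs_anti h, hsxs]
      rintro (rfl | rfl | rfl)
      · refine ⟨le_of_lt hx1m.1, ?_⟩
        rw [abs_of_pos (hspos (lt_trans hx1m.2 hx0xs))]
        exact hx1e
      · refine ⟨le_of_lt (lt_trans hx0pos hx2m.1), ?_⟩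
        rw [abs_of_pos (hspos hx2m.2)]
        exact hx2e
      · refine ⟨le_of_lt (lt_trans hxspos hx3m.1), ?_⟩
        have hsneg : 1 + a * Real.exp (-x/b) < 0 := by
          linarith [hs_anti hx3m.1, hsxs]
        rw [abs_of_neg hsneg]
        have h6 := hx3e
        rw [hgval] at h6
        linear_combination -h6
  rw [hset, Set.ncard_eq_three]
  exact ⟨x1, x2, x3,
    by have := lt_trans hx1m.2 hx2m.1; exact ne_of_lt this,
    by have : x1 < x3 := lt_trans (lt_trans hx1m.2 hx0xs) hx3m.1; exact ne_of_lt this,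
    by have : x2 < x3 := lt_trans hx2m.2 hx3m.1; exact ne_of_lt this, rfl⟩
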